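/- arXiv:2002.12873 — 2 statements merged into one kernel-verified Lean document; each statement's English description precedes it below -/
import Mathlib

section
/- Let P, P̂ be n×r matrices with orthonormal columns satisfying dist(P̂,P) + √(|M|μr/n) < 1 for a subset M ⊆ [n], where P is μ-incoherent (each row of P has squared norm at most μr/n). Then the matrix I_M^⊤(I − P̂P̂^⊤)I_M is invertible and ‖(I_M^⊤(I − P̂P̂^⊤)I_M)^{−1}‖ ≤ 1 / (1 − (dist(P̂,P) + √(|M|μr/n))²). -/
open Matrix BigOperators

noncomputable def specNorm {m n : Type*} [Fintype m] [Fintype n] [DecidableEq n]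
    (A : Matrix m n ℝ) : ℝ :=
  ‖LinearMap.toContinuousLinearMap (Matrix.toEuclideanLin A)‖

noncomputable def distP {n r : ℕ} (Q P : Matrix (Fin n) (Fin r) ℝ) : ℝ :=
  specNorm ((1 - Q * Qᵀ) * P)

def selMat {n : ℕ} (M : Finset (Fin n)) : Matrix (Fin n) {i // i ∈ M} ℝ :=
  fun i j => if (j : Fin n) = i then 1 else 0

noncomputable def enorm {n : ℕ} (v : Fin n → ℝ) : ℝ :=
  Real.sqrt (∑ i, v i ^ 2)

noncomputable def smin {m n : Type*} [Fintype m] [Fintype n] [DecidableEq m] [DecidableEq n]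
    (A : Matrix m n ℝ) : ℝ :=
  Real.sqrt (⨅ i, (Matrix.isHermitian_conjTranspose_mul_self A).eigenvalues i)

noncomputable def lamMax {m : Type*} [Fintype m] [DecidableEq m]
    {A : Matrix m m ℝ} (hA : A.IsHermitian) : ℝ :=
  ⨆ i, hA.eigenvalues i

noncomputable def lamMin {m : Type*} [Fintype m] [DecidableEq m]
    {A : Matrix m m ℝ} (hA : A.IsHermitian) : ℝ :=
  ⨅ i, hA.eigenvalues i

noncomputable def eigDesc {n : ℕ} {A : Matrix (Fin n) (Fin n) ℝ} (hA : A.IsHermitian)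
    (k : ℕ) : ℝ :=
  ((List.ofFn hA.eigenvalues).mergeSort (fun a b => decide (b ≤ a))).getD k 0

open scoped Matrix.Norms.L2Operator

set_option linter.unusedSectionVars false
set_option maxHeartbeats 1000000

namespace GramAux

variable {m n : Type*} [Fintype m] [Fintype n] [DecidableEq m] [DecidableEq n]

lemma tct (A : Matrix m n ℝ) : Aᴴ = Aᵀ := by
  ext i j; simp [Matrix.conjTranspose_apply]

lemma specNorm_eq (A : Matrix m n ℝ) : specNorm A = ‖A‖ := rfl

lemma norm_t (A : Matrix m n ℝ) : ‖Aᵀ‖ = ‖A‖ := by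
  rw [← tct]; exact Matrix.l2_opNorm_conjTranspose A

lemma norm_one_le : ‖(1 : Matrix m m ℝ)‖ ≤ 1 := by
  rw [Matrix.cstar_norm_def, _root_.map_one]
  exact ContinuousLinearMap.norm_id_le

lemma norm_tmul (A : Matrix m n ℝ) : ‖Aᵀ * A‖ = ‖A‖ * ‖A‖ := by
  rw [← tct]; exact Matrix.l2_opNorm_conjTranspose_mul_self A

lemma norm_le_one {A : Matrix m n ℝ} (h : Aᵀ * A = 1) : ‖A‖ ≤ 1 := by
  have h1 : ‖A‖ * ‖A‖ ≤ 1 := by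
    rw [← norm_tmul, h]; exact norm_one_le
  nlinarith [(norm_nonneg A : (0:ℝ) ≤ ‖A‖)]

lemma norm_diag_le (d : m → ℝ) {c : ℝ} (hc : 0 ≤ c) (h : ∀ i, |d i| ≤ c) :
    ‖Matrix.diagonal d‖ ≤ c := by
  rw [Matrix.l2_opNorm_def]
  refine ContinuousLinearMap.opNorm_le_bound _ hc fun x => ?_
  have hx : ∀ y : EuclideanSpace ℝ m, ‖y‖ = Real.sqrt (∑ i, (y i) ^ 2) := by
    intro y
    rw [EuclideanSpace.norm_eq]
    congr 1
    refine Finset.sum_congr rfl fun i _ => ?_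
    rw [Real.norm_eq_abs, sq_abs]
  set f := (Matrix.toEuclideanLin ≪≫ₗ LinearMap.toContinuousLinearMap) (Matrix.diagonal d)
    with hf
  have happ : ∀ i, (f x) i = d i * x i := by
    intro i
    show (Matrix.diagonal d *ᵥ ⇑x) i = d i * x i
    simp [Matrix.mulVec_diagonal]
  rw [hx, hx]
  have hsum : ∑ i, ((f x) i) ^ 2 ≤ c ^ 2 * ∑ i, (x i) ^ 2 := by
    rw [Finset.mul_sum]
    refine Finset.sum_le_sum fun i _ => ?_
    rw [happ i, mul_pow]
    have h2 : (d i) ^ 2 ≤ c ^ 2 := by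
      nlinarith [abs_nonneg (d i), le_abs_self (d i), neg_abs_le (d i), h i]
    nlinarith [sq_nonneg (x i)]
  calc Real.sqrt (∑ i, ((f x) i) ^ 2)
      ≤ Real.sqrt (c ^ 2 * ∑ i, (x i) ^ 2) := Real.sqrt_le_sqrt hsum
    _ = c * Real.sqrt (∑ i, (x i) ^ 2) := by
        rw [Real.sqrt_mul (sq_nonneg c), Real.sqrt_sq hc]

lemma abs_le_norm_diag (d : m → ℝ) (i : m) : |d i| ≤ ‖Matrix.diagonal d‖ := by
  set x0 : EuclideanSpace ℝ m := EuclideanSpace.single i 1 with hx0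
  have key := Matrix.l2_opNorm_mulVec (Matrix.diagonal d) x0
  have h1 : ((EuclideanSpace.equiv m ℝ).symm (Matrix.diagonal d *ᵥ x0) : EuclideanSpace ℝ m)
      = EuclideanSpace.single i (d i) := by
    ext j
    rcases eq_or_ne j i with rfl | hne
    · simp [hx0, EuclideanSpace.single_apply, Matrix.mulVec_diagonal]
    · simp [hx0, EuclideanSpace.single_apply, Matrix.mulVec_diagonal, hne]
  have h2 : ‖x0‖ = 1 := by rw [hx0, EuclideanSpace.norm_single]; norm_num
  rw [h1, h2, mul_one, EuclideanSpace.norm_single, Real.norm_eq_abs] at key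
  exact key

lemma norm_umul {U : Matrix m m ℝ} (A : Matrix m n ℝ) (h1 : Uᵀ * U = 1) (h2 : U * Uᵀ = 1) :
    ‖U * A‖ = ‖A‖ := by
  refine le_antisymm ?_ ?_
  · calc ‖U * A‖ ≤ ‖U‖ * ‖A‖ := Matrix.l2_opNorm_mul U A
      _ ≤ 1 * ‖A‖ := by
          have := norm_le_one h1
          have := (norm_nonneg A : (0:ℝ) ≤ ‖A‖)
          nlinarith
      _ = ‖A‖ := one_mul _
  · have hA : A = Uᵀ * (U * A) := by rw [← Matrix.mul_assoc, h1, Matrix.one_mul]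
    calc ‖A‖ = ‖Uᵀ * (U * A)‖ := by rw [← hA]
      _ ≤ ‖Uᵀ‖ * ‖U * A‖ := Matrix.l2_opNorm_mul _ _
      _ ≤ 1 * ‖U * A‖ := by
          have h3 : ‖Uᵀ‖ ≤ 1 := by rw [norm_t]; exact norm_le_one h1
          have := (norm_nonneg (U*A) : (0:ℝ) ≤ ‖U*A‖)
          nlinarith
      _ = ‖U * A‖ := one_mul _

lemma norm_mulu {U : Matrix m m ℝ} (A : Matrix n m ℝ) (h1 : Uᵀ * U = 1) (h2 : U * Uᵀ = 1) :
    ‖A * U‖ = ‖A‖ := by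
  have := norm_umul (U := Uᵀ) Aᵀ (by rwa [Matrix.transpose_transpose]) (by rwa [Matrix.transpose_transpose])
  calc ‖A * U‖ = ‖(A * U)ᵀ‖ := (norm_t _).symm
    _ = ‖Uᵀ * Aᵀ‖ := by rw [Matrix.transpose_mul]
    _ = ‖Aᵀ‖ := this
    _ = ‖A‖ := norm_t A

lemma diag_t (t : ℝ) (f : m → ℝ) :
    Matrix.diagonal (fun i => t - f i) = t • (1 : Matrix m m ℝ) - Matrix.diagonal f := by
  ext i j
  rcases eq_or_ne i j with rfl | h
  · simp [Matrix.diagonal_apply_eq, Matrix.one_apply_eq, Matrix.sub_apply, Matrix.smul_apply]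
  · simp [Matrix.diagonal_apply_ne _ h, Matrix.one_apply_ne h, Matrix.sub_apply,
      Matrix.smul_apply]

lemma det_smul_sub (A B : Matrix m m ℝ) (t : ℝ) :
    Matrix.det (t • (1 : Matrix m m ℝ) - A * B) = Matrix.det (t • (1 : Matrix m m ℝ) - B * A) := by
  rcases eq_or_ne t 0 with rfl | ht
  · simp only [zero_smul, zero_sub, Matrix.det_neg, Matrix.det_mul]
    ring
  · have key : ∀ C D : Matrix m m ℝ,
        t • (1 : Matrix m m ℝ) - C * D = t • ((1 : Matrix m m ℝ) - (t⁻¹ • C) * D) := by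
      intro C D
      rw [smul_sub, Matrix.smul_mul, smul_smul, mul_inv_cancel₀ ht, one_smul]
    rw [key A B, key B A, Matrix.det_smul, Matrix.det_smul,
      Matrix.det_one_sub_mul_comm (t⁻¹ • A) B]
    congr 2
    rw [Matrix.mul_smul, Matrix.smul_mul]

lemma spectral_real {X : Matrix m m ℝ} (hX : X.IsHermitian) :
    ∃ U : Matrix m m ℝ, Uᵀ * U = 1 ∧ U * Uᵀ = 1 ∧
      X = U * Matrix.diagonal hX.eigenvalues * Uᵀ := by
  refine ⟨(hX.eigenvectorUnitary : Matrix m m ℝ), ?_, ?_, ?_⟩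
  · have := (Unitary.mem_iff.mp hX.eigenvectorUnitary.2).1
    rwa [Matrix.star_eq_conjTranspose, tct] at this
  · have := (Unitary.mem_iff.mp hX.eigenvectorUnitary.2).2
    rwa [Matrix.star_eq_conjTranspose, tct] at this
  · have := hX.spectral_theorem
    rwa [Unitary.conjStarAlgAut_apply, Matrix.star_eq_conjTranspose, tct] at this

lemma det_smul_one_sub_eig {X : Matrix m m ℝ} (hX : X.IsHermitian)
    {U : Matrix m m ℝ} (h1 : Uᵀ * U = 1) (h2 : U * Uᵀ = 1)
    {d : m → ℝ} (hXd : X = U * Matrix.diagonal d * Uᵀ) (t : ℝ) :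
    Matrix.det (t • (1 : Matrix m m ℝ) - X) = ∏ i, (t - d i) := by
  have hUdet : Matrix.det U * Matrix.det Uᵀ = 1 := by
    rw [← Matrix.det_mul, h2, Matrix.det_one]
  have key : t • (1 : Matrix m m ℝ) - X
      = U * Matrix.diagonal (fun i => t - d i) * Uᵀ := by
    have hone : t • (1 : Matrix m m ℝ) = U * (t • (1 : Matrix m m ℝ)) * Uᵀ := by
      rw [Matrix.mul_smul, Matrix.mul_one, Matrix.smul_mul, h2]
    rw [hXd, diag_t, Matrix.mul_sub, Matrix.sub_mul, ← hone]
  rw [key, Matrix.det_mul, Matrix.det_mul, Matrix.det_diagonal]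
  calc (Matrix.det U * ∏ i, (t - d i)) * Matrix.det Uᵀ
      = (Matrix.det U * Matrix.det Uᵀ) * ∏ i, (t - d i) := by ring
    _ = ∏ i, (t - d i) := by rw [hUdet, one_mul]

/-- Key: norms of `1 - A*B` and `1 - B*A` agree when both are Hermitian. -/
lemma norm_one_sub_le_of_det_eq {X Y : Matrix m m ℝ} (hX : X.IsHermitian) (hY : Y.IsHermitian)
    (hdet : ∀ t : ℝ, Matrix.det (t • (1 : Matrix m m ℝ) - X)
      = Matrix.det (t • (1 : Matrix m m ℝ) - Y)) :
    ‖(1 : Matrix m m ℝ) - X‖ ≤ ‖(1 : Matrix m m ℝ) - Y‖ := by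
  obtain ⟨U, hU1, hU2, hXd⟩ := spectral_real hX
  obtain ⟨V, hV1, hV2, hYd⟩ := spectral_real hY
  set d := hX.eigenvalues
  set e := hY.eigenvalues
  have hdet' : ∀ t : ℝ, ∏ i, (t - d i) = ∏ i, (t - e i) := by
    intro t
    rw [← det_smul_one_sub_eig hX hU1 hU2 hXd t, ← det_smul_one_sub_eig hY hV1 hV2 hYd t, hdet t]
  -- each d i is some e j
  have hmem : ∀ i, ∃ j, e j = d i := by
    intro i
    have h0 : ∏ j, (d i - e j) = 0 := by
      rw [← hdet' (d i)]
      refine Finset.prod_eq_zero (Finset.mem_univ i) ?_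
      simp
    obtain ⟨j, _, hj⟩ := Finset.prod_eq_zero_iff.mp h0
    exact ⟨j, by linarith [sub_eq_zero.mp hj]⟩
  have hrw : ∀ (W : Matrix m m ℝ) (f : m → ℝ), Wᵀ * W = 1 → W * Wᵀ = 1 →
      ‖(1 : Matrix m m ℝ) - W * Matrix.diagonal f * Wᵀ‖
        = ‖Matrix.diagonal (fun i => 1 - f i)‖ := by
    intro W f hW1 hW2
    have : (1 : Matrix m m ℝ) - W * Matrix.diagonal f * Wᵀ
        = W * Matrix.diagonal (fun i => 1 - f i) * Wᵀ := by
      rw [diag_t, one_smul, Matrix.mul_sub, Matrix.sub_mul, Matrix.mul_one, hW2]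
    rw [this, Matrix.mul_assoc, norm_umul _ hW1 hW2,
      norm_mulu (U := Wᵀ) _ (by rw [Matrix.transpose_transpose]; exact hW2)
        (by rw [Matrix.transpose_transpose]; exact hW1)]
  rw [hXd, hYd, hrw U d hU1 hU2, hrw V e hV1 hV2]
  refine norm_diag_le _ (norm_nonneg _) fun i => ?_
  obtain ⟨j, hj⟩ := hmem i
  calc |1 - d i| = |1 - e j| := by rw [← hj]
    _ ≤ ‖Matrix.diagonal (fun k => 1 - e k)‖ := by
        have h := abs_le_norm_diag (fun k => 1 - e k) j
        simpa using h



lemma enorm_eq {k : Type*} [Fintype k] (y : EuclideanSpace ℝ k) :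
    ‖y‖ = Real.sqrt (∑ i, (y i) ^ 2) := by
  rw [EuclideanSpace.norm_eq]
  congr 1
  refine Finset.sum_congr rfl fun i _ => ?_
  rw [Real.norm_eq_abs, sq_abs]

lemma isherm_tmul (W : Matrix m m ℝ) : (Wᵀ * W).IsHermitian := by
  show (Wᵀ * W)ᴴ = Wᵀ * W
  rw [tct, Matrix.transpose_mul, Matrix.transpose_transpose]

lemma norm_one_sub_mul_comm (A B : Matrix m m ℝ) (hAB : (A * B).IsHermitian)
    (hBA : (B * A).IsHermitian) :
    ‖(1 : Matrix m m ℝ) - A * B‖ = ‖(1 : Matrix m m ℝ) - B * A‖ := by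
  have hd := det_smul_sub A B
  exact le_antisymm (norm_one_sub_le_of_det_eq hAB hBA hd)
    (norm_one_sub_le_of_det_eq hBA hAB fun t => (hd t).symm)

lemma gram_of_proj {N R : Type*} [Fintype N] [DecidableEq N] [Fintype R] [DecidableEq R]
    {P Q : Matrix N R ℝ} (hP : Pᵀ * P = 1) (hQ : Qᵀ * Q = 1) :
    ((1 - P * Pᵀ) * Q)ᵀ * ((1 - P * Pᵀ) * Q) = 1 - (Pᵀ * Q)ᵀ * (Pᵀ * Q) := by
  have hJ : P * Pᵀ * (P * Pᵀ) = P * Pᵀ := by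
    rw [Matrix.mul_assoc P Pᵀ _, ← Matrix.mul_assoc Pᵀ P Pᵀ, hP, Matrix.one_mul]
  have hidem : (1 - P * Pᵀ) * (1 - P * Pᵀ) = 1 - P * Pᵀ := by
    rw [Matrix.sub_mul, Matrix.one_mul, Matrix.mul_sub, Matrix.mul_one, hJ]
    abel
  have h1 : ((1 - P * Pᵀ) * Q)ᵀ = Qᵀ * (1 - P * Pᵀ) := by
    rw [Matrix.transpose_mul, Matrix.transpose_sub, Matrix.transpose_one, Matrix.transpose_mul,
      Matrix.transpose_transpose]
  rw [h1]
  conv_lhs => rw [Matrix.mul_assoc, ← Matrix.mul_assoc (1 - P * Pᵀ) (1 - P * Pᵀ) Q, hidem]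
  rw [Matrix.sub_mul, Matrix.one_mul, Matrix.mul_sub, hQ]
  congr 1
  simp only [Matrix.transpose_mul, Matrix.transpose_transpose, Matrix.mul_assoc]

end GramAux

open GramAux

theorem gram_inverse_norm_bound
    {n r : ℕ} (μ : ℝ) (P Phat : Matrix (Fin n) (Fin r) ℝ)
    (hP : Pᵀ * P = 1) (hPhat : Phatᵀ * Phat = 1)
    (hinc : ∀ m : Fin n, ∑ j, (P m j) ^ 2 ≤ μ * r / n)
    (M : Finset (Fin n))
    (hsmall : distP Phat P + Real.sqrt ((M.card : ℝ) * μ * r / n) < 1) :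
    IsUnit ((selMat M)ᵀ * (1 - Phat * Phatᵀ) * selMat M) ∧
    specNorm ((selMat M)ᵀ * (1 - Phat * Phatᵀ) * selMat M)⁻¹ ≤
      1 / (1 - (distP Phat P + Real.sqrt ((M.card : ℝ) * μ * r / n)) ^ 2) := by
  classical
  set S := selMat M with hSdef
  set ε := distP Phat P + Real.sqrt ((M.card : ℝ) * μ * r / n) with hεdef
  have hdist_rfl : distP Phat P = ‖(1 - Phat * Phatᵀ) * P‖ := rfl
  have hd0 : 0 ≤ distP Phat P := by rw [hdist_rfl]; exact norm_nonneg _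
  have hs0 : 0 ≤ Real.sqrt ((M.card : ℝ) * μ * r / n) := Real.sqrt_nonneg _
  have hε0 : 0 ≤ ε := add_nonneg hd0 hs0
  have hε1 : ε < 1 := hsmall
  -- selection matrix is an isometry
  have hS : Sᵀ * S = 1 := by
    ext j k
    simp only [Matrix.mul_apply, Matrix.transpose_apply, hSdef, selMat, ite_mul, one_mul,
      zero_mul, Finset.sum_ite_eq, Finset.mem_univ, if_true, Matrix.one_apply]
    rcases eq_or_ne j k with rfl | hne
    · simp
    · have : (↑k : Fin n) ≠ ↑j := fun h => hne (Subtype.ext h).symm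
      simp [this, hne]
  have hSentry : ∀ (j : {i // i ∈ M}) (k : Fin r), (Sᵀ * P) j k = P (↑j) k := by
    intro j k
    simp only [Matrix.mul_apply, Matrix.transpose_apply, hSdef, selMat, ite_mul, one_mul,
      zero_mul, Finset.sum_ite_eq, Finset.mem_univ, if_true]
  -- nonnegativity of the incoherence bound
  have hc0 : (0 : ℝ) ≤ (M.card : ℝ) * μ * r / n := by
    rcases M.eq_empty_or_nonempty with rfl | ⟨m0, hm0⟩
    · simp
    · have h1 := hinc m0
      have h2 : (0 : ℝ) ≤ μ * r / n := le_trans (by positivity) h1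
      have h3 : (0 : ℝ) ≤ (M.card : ℝ) := by positivity
      calc (0 : ℝ) ≤ (M.card : ℝ) * (μ * r / n) := mul_nonneg h3 h2
        _ = (M.card : ℝ) * μ * r / n := by ring
  -- norm bound on Sᵀ * P
  have hSP : ‖Sᵀ * P‖ ≤ Real.sqrt ((M.card : ℝ) * μ * r / n) := by
    rw [Matrix.l2_opNorm_def]
    refine ContinuousLinearMap.opNorm_le_bound _ (Real.sqrt_nonneg _) fun x => ?_
    set f := (Matrix.toEuclideanLin ≪≫ₗ LinearMap.toContinuousLinearMap) (Sᵀ * P) with hf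
    have happ : ∀ j : {i // i ∈ M}, (f x) j = ∑ k, P (↑j) k * x k := by
      intro j
      show ((Sᵀ * P) *ᵥ ⇑x) j = _
      simp only [Matrix.mulVec, dotProduct, hSentry]
    rw [enorm_eq, enorm_eq]
    have hsum : ∑ j, ((f x) j) ^ 2 ≤ ((M.card : ℝ) * μ * r / n) * ∑ k, (x k) ^ 2 := by
      have hb : ∀ j : {i // i ∈ M}, ((f x) j) ^ 2 ≤ (μ * r / n) * ∑ k, (x k) ^ 2 := by
        intro j
        rw [happ j]
        have hcs := Finset.sum_mul_sq_le_sq_mul_sq Finset.univ (fun k => P (↑j) k)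
          (fun k => x k)
        have hxx : (0:ℝ) ≤ ∑ k, (x k) ^ 2 := by positivity
        calc (∑ k, P (↑j) k * x k) ^ 2 ≤ (∑ k, (P (↑j) k) ^ 2) * (∑ k, (x k) ^ 2) := hcs
          _ ≤ (μ * r / n) * ∑ k, (x k) ^ 2 :=
              mul_le_mul_of_nonneg_right (hinc ↑j) hxx
      calc ∑ j, ((f x) j) ^ 2 ≤ ∑ _j : {i // i ∈ M}, (μ * r / n) * ∑ k, (x k) ^ 2 :=
            Finset.sum_le_sum fun j _ => hb j
        _ = (Fintype.card {i // i ∈ M} : ℝ) * ((μ * r / n) * ∑ k, (x k) ^ 2) := by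
            rw [Finset.sum_const, nsmul_eq_mul, Finset.card_univ]
        _ = ((M.card : ℝ) * μ * r / n) * ∑ k, (x k) ^ 2 := by
            rw [Fintype.card_coe]; ring
    calc Real.sqrt (∑ j, ((f x) j) ^ 2)
        ≤ Real.sqrt (((M.card : ℝ) * μ * r / n) * ∑ k, (x k) ^ 2) := Real.sqrt_le_sqrt hsum
      _ = Real.sqrt ((M.card : ℝ) * μ * r / n) * Real.sqrt (∑ k, (x k) ^ 2) :=
          Real.sqrt_mul hc0 _
  -- basic norm bounds
  have hPn : ‖P‖ ≤ 1 := norm_le_one hP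
  have hPhn : ‖Phat‖ ≤ 1 := norm_le_one hPhat
  have hStn : ‖Sᵀ‖ ≤ 1 := by rw [norm_t]; exact norm_le_one hS
  have hPtn : ‖Pᵀ‖ ≤ 1 := by rw [norm_t]; exact hPn
  -- sin-theta symmetry: ‖(1 - P Pᵀ) Phat‖ = distP Phat P
  set W := Pᵀ * Phat with hW
  have hsq1 : ‖(1 - P * Pᵀ) * Phat‖ * ‖(1 - P * Pᵀ) * Phat‖
      = ‖(1 : Matrix (Fin r) (Fin r) ℝ) - Wᵀ * W‖ := by
    rw [← norm_tmul, gram_of_proj hP hPhat]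
  have hsq2 : distP Phat P * distP Phat P = ‖(1 : Matrix (Fin r) (Fin r) ℝ) - W * Wᵀ‖ := by
    rw [hdist_rfl, ← norm_tmul, gram_of_proj hPhat hP]
    congr 2
    rw [hW]
    simp only [Matrix.transpose_mul, Matrix.transpose_transpose]
  have hWW : ‖(1 : Matrix (Fin r) (Fin r) ℝ) - Wᵀ * W‖
      = ‖(1 : Matrix (Fin r) (Fin r) ℝ) - W * Wᵀ‖ := by
    have h1 := isherm_tmul W
    have h2 := isherm_tmul Wᵀ
    rw [Matrix.transpose_transpose] at h2
    exact norm_one_sub_mul_comm Wᵀ W h1 h2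
  have hproj : ‖(1 - P * Pᵀ) * Phat‖ = distP Phat P := by
    rw [← Real.sqrt_mul_self (norm_nonneg ((1 - P * Pᵀ) * Phat)), hsq1, hWW, ← hsq2,
      Real.sqrt_mul_self hd0]
  -- key bound: ‖Sᵀ Phat‖ ≤ ε
  have hdecomp : Sᵀ * Phat = Sᵀ * P * (Pᵀ * Phat) + Sᵀ * ((1 - P * Pᵀ) * Phat) := by
    rw [Matrix.sub_mul, Matrix.one_mul, Matrix.mul_sub]
    simp only [Matrix.mul_assoc]
    abel
  have hG : ‖Sᵀ * Phat‖ ≤ ε := by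
    rw [hdecomp]
    have h1 : ‖Sᵀ * P * (Pᵀ * Phat)‖ ≤ Real.sqrt ((M.card : ℝ) * μ * r / n) := by
      calc ‖Sᵀ * P * (Pᵀ * Phat)‖ ≤ ‖Sᵀ * P‖ * ‖Pᵀ * Phat‖ := Matrix.l2_opNorm_mul _ _
        _ ≤ Real.sqrt ((M.card : ℝ) * μ * r / n) := by
            have h2 : ‖Pᵀ * Phat‖ ≤ 1 := by
              calc ‖Pᵀ * Phat‖ ≤ ‖Pᵀ‖ * ‖Phat‖ := Matrix.l2_opNorm_mul _ _
                _ ≤ 1 := by nlinarith [(norm_nonneg Pᵀ : (0:ℝ) ≤ ‖Pᵀ‖),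
                    (norm_nonneg Phat : (0:ℝ) ≤ ‖Phat‖)]
            nlinarith [(norm_nonneg (Sᵀ * P) : (0:ℝ) ≤ ‖Sᵀ * P‖),
              (norm_nonneg (Pᵀ * Phat) : (0:ℝ) ≤ ‖Pᵀ * Phat‖)]
    have h3 : ‖Sᵀ * ((1 - P * Pᵀ) * Phat)‖ ≤ distP Phat P := by
      calc ‖Sᵀ * ((1 - P * Pᵀ) * Phat)‖ ≤ ‖Sᵀ‖ * ‖(1 - P * Pᵀ) * Phat‖ :=
            Matrix.l2_opNorm_mul _ _
        _ ≤ distP Phat P := by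
            rw [← hproj]
            nlinarith [(norm_nonneg ((1 - P * Pᵀ) * Phat) : (0:ℝ) ≤ ‖(1 - P * Pᵀ) * Phat‖)]
    calc ‖Sᵀ * P * (Pᵀ * Phat) + Sᵀ * ((1 - P * Pᵀ) * Phat)‖
        ≤ ‖Sᵀ * P * (Pᵀ * Phat)‖ + ‖Sᵀ * ((1 - P * Pᵀ) * Phat)‖ := norm_add_le _ _
      _ ≤ Real.sqrt ((M.card : ℝ) * μ * r / n) + distP Phat P := add_le_add h1 h3
      _ = ε := by rw [hεdef]; ring
  -- the gram matrix
  set G := Sᵀ * Phat with hGdef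
  have hA : Sᵀ * (1 - Phat * Phatᵀ) * S = 1 - G * Gᵀ := by
    rw [Matrix.mul_sub, Matrix.mul_one, Matrix.sub_mul, hS, hGdef, Matrix.transpose_mul,
      Matrix.transpose_transpose]
    congr 1
    simp only [Matrix.mul_assoc]
  have hGGt : ‖G * Gᵀ‖ = ‖G‖ * ‖G‖ := by
    have h := norm_tmul Gᵀ
    rwa [Matrix.transpose_transpose, norm_t] at h
  have hGG_le : ‖G * Gᵀ‖ ≤ ε ^ 2 := by
    rw [hGGt]
    nlinarith [(norm_nonneg G : (0:ℝ) ≤ ‖G‖)]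
  have hlt : ‖G * Gᵀ‖ < 1 := lt_of_le_of_lt hGG_le (by nlinarith)
  have hpos : (0 : ℝ) < 1 - ε ^ 2 := by nlinarith
  constructor
  · rw [hA]
    exact isUnit_one_sub_of_norm_lt_one hlt
  · rw [specNorm_eq, hA, Matrix.nonsing_inv_eq_ringInverse, ← geom_series_eq_inverse _ hlt]
    have hnorm_pow : ∀ k : ℕ, ‖(G * Gᵀ) ^ k‖ ≤ ‖G * Gᵀ‖ ^ k := by
      intro k
      cases k with
      | zero => simpa using (norm_one_le : ‖(1 : Matrix {i // i ∈ M} {i // i ∈ M} ℝ)‖ ≤ 1)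
      | succ k => exact norm_pow_le' _ (Nat.succ_pos k)
    have hgeom : Summable fun k : ℕ => ‖G * Gᵀ‖ ^ k :=
      summable_geometric_of_lt_one (norm_nonneg _) hlt
    have hs1 : Summable fun k : ℕ => ‖(G * Gᵀ) ^ k‖ :=
      Summable.of_nonneg_of_le (fun k => norm_nonneg _) hnorm_pow hgeom
    calc ‖∑' k : ℕ, (G * Gᵀ) ^ k‖ ≤ ∑' k : ℕ, ‖(G * Gᵀ) ^ k‖ := norm_tsum_le_tsum_norm hs1
      _ ≤ ∑' k : ℕ, ‖G * Gᵀ‖ ^ k := Summable.tsum_le_tsum hnorm_pow hs1 hgeom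
      _ = (1 - ‖G * Gᵀ‖)⁻¹ := tsum_geometric_of_lt_one (norm_nonneg _) hlt
      _ ≤ 1 / (1 - ε ^ 2) := by
          rw [one_div]
          exact inv_anti₀ hpos (by linarith)
end

section
/- η-step noisy power method error bound: with A = UΣU^⊤ + U_⊥Σ_⊥U_⊥^⊤ symmetric PSD and Ũ_η := A^η Û₀ + Σ_{i=1}^η A^{η−i}W_i for noise matrices W_i, if √(1 − dist²(Û₀,U)) > ‖Σ_{i=1}^η Σ^{−i}U^⊤W_i‖, then the Q factor Û of Ũ_η satisfies dist(Û,U) ≤ (R^η dist(Û₀,U) + σ_r^{−η}‖Σ_{i=1}^η Σ_⊥^{η−i}U_⊥^⊤W_i‖) / (√(1 − dist²(Û₀,U)) − ‖Σ_{i=1}^η Σ^{−i}U^⊤W_i‖), where R = σ_{r+1}/σ_r. -/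
open Matrix BigOperators

section Helpers

noncomputable def tc {m n : ℕ} (A : Matrix (Fin m) (Fin n) ℝ) :
    EuclideanSpace ℝ (Fin n) →L[ℝ] EuclideanSpace ℝ (Fin m) :=
  LinearMap.toContinuousLinearMap (Matrix.toEuclideanLin A)

lemma specNorm_eq' {m n : ℕ} (A : Matrix (Fin m) (Fin n) ℝ) : specNorm A = ‖tc A‖ := rfl

lemma tc_apply {m n : ℕ} (A : Matrix (Fin m) (Fin n) ℝ) (x : EuclideanSpace ℝ (Fin n)) :
    tc A x = A *ᵥ x := rfl

lemma norm_sq_eq {k : ℕ} (x : EuclideanSpace ℝ (Fin k)) :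
    ‖x‖ ^ 2 = (x : Fin k → ℝ) ⬝ᵥ (x : Fin k → ℝ) := by
  rw [EuclideanSpace.norm_eq, Real.sq_sqrt (by positivity)]
  simp [dotProduct, sq]

lemma norm_tc_sq {m n : ℕ} (A : Matrix (Fin m) (Fin n) ℝ) (x : EuclideanSpace ℝ (Fin n)) :
    ‖tc A x‖ ^ 2 = (x : Fin n → ℝ) ⬝ᵥ ((Aᵀ * A) *ᵥ (x : Fin n → ℝ)) := by
  rw [norm_sq_eq, tc_apply]
  rw [Matrix.dotProduct_mulVec, ← Matrix.mulVec_transpose, Matrix.mulVec_mulVec,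
    dotProduct_comm]

lemma tc_mul {m n p : ℕ} (A : Matrix (Fin m) (Fin n) ℝ) (B : Matrix (Fin n) (Fin p) ℝ)
    (x : EuclideanSpace ℝ (Fin p)) : tc (A * B) x = tc A (tc B x) := by
  simp [tc, Matrix.mulVec_mulVec]

lemma tc_add_apply {m n : ℕ} (A B : Matrix (Fin m) (Fin n) ℝ) (x : EuclideanSpace ℝ (Fin n)) :
    tc (A + B) x = tc A x + tc B x := by
  simp [tc, Matrix.add_mulVec]

lemma sq_le_sq_imp_le {a b : ℝ} (ha : 0 ≤ a) (hb : 0 ≤ b) (h : a ^ 2 ≤ b ^ 2) : a ≤ b :=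
  le_of_pow_le_pow_left₀ two_ne_zero hb h

lemma norm_tc_of_orth {m n : ℕ} {Q : Matrix (Fin m) (Fin n) ℝ} (hQ : Qᵀ * Q = 1)
    (x : EuclideanSpace ℝ (Fin n)) : ‖tc Q x‖ = ‖x‖ := by
  have h : ‖tc Q x‖ ^ 2 = ‖x‖ ^ 2 := by
    rw [norm_tc_sq, hQ, Matrix.one_mulVec, norm_sq_eq]
  have h1 := sq_le_sq_imp_le (norm_nonneg _) (norm_nonneg _) h.le
  have h2 := sq_le_sq_imp_le (norm_nonneg _) (norm_nonneg _) h.ge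
  linarith

lemma pythagoras {n r s : ℕ} {U : Matrix (Fin n) (Fin r) ℝ} {V : Matrix (Fin n) (Fin s) ℝ}
    (hcomp : U * Uᵀ + V * Vᵀ = 1) (z : EuclideanSpace ℝ (Fin n)) :
    ‖tc Uᵀ z‖ ^ 2 + ‖tc Vᵀ z‖ ^ 2 = ‖z‖ ^ 2 := by
  rw [norm_tc_sq, norm_tc_sq, norm_sq_eq, Matrix.transpose_transpose, Matrix.transpose_transpose,
    ← dotProduct_add, ← Matrix.add_mulVec, hcomp, Matrix.one_mulVec]

lemma norm_tc_le {m n : ℕ} (A : Matrix (Fin m) (Fin n) ℝ) (x : EuclideanSpace ℝ (Fin n)) :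
    ‖tc A x‖ ≤ specNorm A * ‖x‖ := (tc A).le_opNorm x

lemma specNorm_nonneg' {m n : ℕ} (A : Matrix (Fin m) (Fin n) ℝ) : 0 ≤ specNorm A :=
  norm_nonneg _

lemma specNorm_le_bound {m n : ℕ} (A : Matrix (Fin m) (Fin n) ℝ) {c : ℝ} (hc : 0 ≤ c)
    (h : ∀ x : EuclideanSpace ℝ (Fin n), ‖tc A x‖ ≤ c * ‖x‖) : specNorm A ≤ c :=
  (tc A).opNorm_le_bound hc h

lemma tc_diagonal_apply {k : ℕ} (d : Fin k → ℝ) (x : EuclideanSpace ℝ (Fin k)) (i : Fin k) :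
    tc (Matrix.diagonal d) x i = d i * x i := by
  rw [tc_apply]; exact Matrix.mulVec_diagonal d x i

lemma norm_tc_diagonal_le {k : ℕ} {d : Fin k → ℝ} {c : ℝ} (hc : 0 ≤ c) (hd : ∀ i, |d i| ≤ c)
    (x : EuclideanSpace ℝ (Fin k)) : ‖tc (Matrix.diagonal d) x‖ ≤ c * ‖x‖ := by
  apply sq_le_sq_imp_le (norm_nonneg _) (mul_nonneg hc (norm_nonneg _))
  rw [mul_pow, norm_sq_eq, norm_sq_eq]
  simp only [dotProduct]
  rw [Finset.mul_sum]
  apply Finset.sum_le_sum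
  intro i _
  rw [show (tc (Matrix.diagonal d) x : EuclideanSpace ℝ (Fin k)) i = d i * x i from
    tc_diagonal_apply d x i]
  have h1 : (d i) ^ 2 ≤ c ^ 2 := by
    calc (d i) ^ 2 = |d i| ^ 2 := (sq_abs _).symm
    _ ≤ c ^ 2 := pow_le_pow_left₀ (abs_nonneg _) (hd i) 2
  nlinarith [mul_self_nonneg (x i)]

lemma norm_tc_diagonal_ge {k : ℕ} {d : Fin k → ℝ} {c : ℝ} (hc : 0 ≤ c) (hd : ∀ i, c ≤ |d i|)
    (x : EuclideanSpace ℝ (Fin k)) : c * ‖x‖ ≤ ‖tc (Matrix.diagonal d) x‖ := by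
  apply sq_le_sq_imp_le (mul_nonneg hc (norm_nonneg _)) (norm_nonneg _)
  rw [mul_pow, norm_sq_eq, norm_sq_eq]
  simp only [dotProduct]
  rw [Finset.mul_sum]
  apply Finset.sum_le_sum
  intro i _
  rw [show (tc (Matrix.diagonal d) x : EuclideanSpace ℝ (Fin k)) i = d i * x i from
    tc_diagonal_apply d x i]
  have h1 : c ^ 2 ≤ (d i) ^ 2 := by
    calc c ^ 2 ≤ |d i| ^ 2 := pow_le_pow_left₀ hc (hd i) 2
    _ = (d i) ^ 2 := sq_abs _
  nlinarith [mul_self_nonneg (x i)]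

lemma tc_transpose {m n : ℕ} (A : Matrix (Fin m) (Fin n) ℝ) :
    tc Aᵀ = ContinuousLinearMap.adjoint (tc A) := by
  have h : Aᵀ = Aᴴ := by
    ext i j; simp [Matrix.conjTranspose_apply]
  rw [h]
  unfold tc
  rw [Matrix.toEuclideanLin_conjTranspose_eq_adjoint, LinearMap.adjoint_toContinuousLinearMap]

lemma surjective_of_lower_bound {r : ℕ} {N : Matrix (Fin r) (Fin r) ℝ} {c : ℝ} (hc : 0 < c)
    (h : ∀ x, c * ‖x‖ ≤ ‖tc N x‖) : Function.Surjective (tc N) := by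
  have hinj : Function.Injective (Matrix.toEuclideanLin N) := by
    intro a b hab
    have h2 : c * ‖a - b‖ ≤ ‖tc N (a - b)‖ := h _
    have h3 : tc N (a - b) = 0 := by
      have hab' : tc N a = tc N b := hab
      rw [map_sub, hab', sub_self]
    rw [h3, norm_zero] at h2
    have h4 : ‖a - b‖ ≤ 0 := by nlinarith [norm_nonneg (a - b)]
    have h5 := le_antisymm h4 (norm_nonneg _)
    rwa [norm_eq_zero, sub_eq_zero] at h5
  exact fun x => (LinearMap.injective_iff_surjective.mp hinj) x

lemma lower_bound_transpose {r : ℕ} {N : Matrix (Fin r) (Fin r) ℝ} {c : ℝ} (hc : 0 ≤ c)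
    (h : ∀ x, c * ‖x‖ ≤ ‖tc N x‖) : ∀ x, c * ‖x‖ ≤ ‖tc Nᵀ x‖ := by
  rcases eq_or_lt_of_le hc with rfl | hc'
  · intro x; simpa using norm_nonneg _
  have hinj : Function.Injective (Matrix.toEuclideanLin N) := by
    intro a b hab
    have h2 : c * ‖a - b‖ ≤ ‖tc N (a - b)‖ := h _
    have h3 : tc N (a - b) = 0 := by
      have hab' : tc N a = tc N b := hab
      rw [map_sub, hab', sub_self]
    rw [h3, norm_zero] at h2
    have h4 : ‖a - b‖ ≤ 0 := by nlinarith [norm_nonneg (a - b)]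
    have h5 := le_antisymm h4 (norm_nonneg _)
    rwa [norm_eq_zero, sub_eq_zero] at h5
  have hsurj : Function.Surjective (Matrix.toEuclideanLin N) :=
    LinearMap.injective_iff_surjective.mp hinj
  let e := LinearEquiv.ofBijective (Matrix.toEuclideanLin N) ⟨hinj, hsurj⟩
  let g : EuclideanSpace ℝ (Fin r) →L[ℝ] EuclideanSpace ℝ (Fin r) :=
    LinearMap.toContinuousLinearMap e.symm.toLinearMap
  have hg : ∀ y, tc N (g y) = y := fun y => e.apply_symm_apply y
  have hgle : ‖g‖ ≤ c⁻¹ := by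
    apply ContinuousLinearMap.opNorm_le_bound _ (by positivity)
    intro y
    have h2 : c * ‖g y‖ ≤ ‖tc N (g y)‖ := h _
    rw [hg] at h2
    rw [inv_mul_eq_div, le_div_iff₀ hc', mul_comm]
    exact h2
  have hcomp : (tc N) ∘L g = ContinuousLinearMap.id ℝ _ :=
    ContinuousLinearMap.ext fun y => hg y
  have hadj : (ContinuousLinearMap.adjoint g) ∘L (ContinuousLinearMap.adjoint (tc N)) =
      ContinuousLinearMap.id ℝ _ := by
    rw [← ContinuousLinearMap.adjoint_comp, hcomp, ContinuousLinearMap.adjoint_id]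
  intro x
  have hx : x = (ContinuousLinearMap.adjoint g) ((ContinuousLinearMap.adjoint (tc N)) x) := by
    have h6 := congrArg (fun f => f x) hadj
    simpa using h6.symm
  have h2 : ‖x‖ ≤ c⁻¹ * ‖(ContinuousLinearMap.adjoint (tc N)) x‖ := by
    calc ‖x‖ = ‖(ContinuousLinearMap.adjoint g) ((ContinuousLinearMap.adjoint (tc N)) x)‖ := by
          rw [← hx]
      _ ≤ ‖ContinuousLinearMap.adjoint g‖ * ‖(ContinuousLinearMap.adjoint (tc N)) x‖ :=
          ContinuousLinearMap.le_opNorm _ _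
      _ ≤ c⁻¹ * ‖(ContinuousLinearMap.adjoint (tc N)) x‖ := by
          apply mul_le_mul_of_nonneg_right _ (norm_nonneg _)
          rw [show ‖ContinuousLinearMap.adjoint g‖ = ‖g‖ from
            LinearIsometryEquiv.norm_map ContinuousLinearMap.adjoint g]
          exact hgle
  rw [tc_transpose]
  calc c * ‖x‖ ≤ c * (c⁻¹ * ‖(ContinuousLinearMap.adjoint (tc N)) x‖) :=
        mul_le_mul_of_nonneg_left h2 hc
    _ = ‖(ContinuousLinearMap.adjoint (tc N)) x‖ := by
        rw [← mul_assoc, mul_inv_cancel₀ (ne_of_gt hc'), one_mul]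

/-- projection pythagoras: for orthonormal Q and U,
    ‖(1-QQᵀ)U x‖² = ‖x‖² - ‖QᵀU x‖². -/
lemma proj_norm_sq {n r s : ℕ} {Q : Matrix (Fin n) (Fin r) ℝ} (hQ : Qᵀ * Q = 1)
    {U : Matrix (Fin n) (Fin s) ℝ} (hU : Uᵀ * U = 1) (x : EuclideanSpace ℝ (Fin s)) :
    ‖tc ((1 - Q * Qᵀ) * U) x‖ ^ 2 = ‖x‖ ^ 2 - ‖tc (Qᵀ * U) x‖ ^ 2 := by
  have key : ∀ (p : ℕ) (X : Matrix (Fin r) (Fin p) ℝ), Qᵀ * (Q * X) = X := fun p X => by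
    rw [← Matrix.mul_assoc, hQ, Matrix.one_mul]
  have hgram : ((1 - Q * Qᵀ) * U)ᵀ * ((1 - Q * Qᵀ) * U) = 1 - (Qᵀ * U)ᵀ * (Qᵀ * U) := by
    simp only [Matrix.transpose_mul, Matrix.transpose_sub, Matrix.transpose_one,
      Matrix.transpose_transpose, Matrix.sub_mul, Matrix.mul_sub, Matrix.one_mul, Matrix.mul_one,
      Matrix.mul_assoc, key, hU]
    abel
  rw [norm_tc_sq, norm_tc_sq, norm_sq_eq, hgram]
  rw [Matrix.sub_mulVec, dotProduct_sub, Matrix.one_mulVec]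


lemma specNorm_zero_rows {m k : ℕ} (hm : m = 0) (A : Matrix (Fin m) (Fin k) ℝ) :
    specNorm A = 0 := by
  refine le_antisymm (specNorm_le_bound A le_rfl ?_) (specNorm_nonneg' A)
  intro x
  have h : ‖tc A x‖ ^ 2 = 0 := by
    rw [norm_sq_eq]
    subst hm
    simp [dotProduct]
  rw [pow_eq_zero_iff two_ne_zero] at h
  rw [h, zero_mul]

lemma transpose_mul_pow {n r : ℕ} {A : Matrix (Fin n) (Fin n) ℝ} {Bt : Matrix (Fin r) (Fin n) ℝ}
    {D : Matrix (Fin r) (Fin r) ℝ} (h : Bt * A = D * Bt) :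
    ∀ k : ℕ, Bt * A ^ k = D ^ k * Bt := by
  intro k
  induction k with
  | zero => simp
  | succ k ih =>
    rw [pow_succ, ← Matrix.mul_assoc, ih, Matrix.mul_assoc, h, ← Matrix.mul_assoc, ← pow_succ]
end Helpers

set_option maxHeartbeats 4000000 in
theorem noisy_PM_eta_steps
    {n r η : ℕ} (A : Matrix (Fin n) (Fin n) ℝ)
    (U Uhat0 Uhat : Matrix (Fin n) (Fin r) ℝ)
    (W : Fin η → Matrix (Fin n) (Fin r) ℝ)
    (Uperp : Matrix (Fin n) (Fin (n - r)) ℝ)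
    (Rm : Matrix (Fin r) (Fin r) ℝ)
    (σ : Fin r → ℝ) (σp : Fin (n - r) → ℝ) (σr σr1 : ℝ)
    (hU : Uᵀ * U = 1) (hUp : Uperpᵀ * Uperp = 1)
    (hU0 : Uhat0ᵀ * Uhat0 = 1) (hUhat : Uhatᵀ * Uhat = 1)
    (horth : Uᵀ * Uperp = 0)
    (hcomp : U * Uᵀ + Uperp * Uperpᵀ = 1)
    (hA : A = U * Matrix.diagonal σ * Uᵀ + Uperp * Matrix.diagonal σp * Uperpᵀ)
    (hσr : ∀ i, σr ≤ σ i) (hσrpos : 0 < σr)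
    (hσpnn : ∀ i, 0 ≤ σp i) (hσr1 : ∀ i, σp i ≤ σr1)
    (hQR : A ^ η * Uhat0 + ∑ i : Fin η, A ^ (η - 1 - (i : ℕ)) * W i = Uhat * Rm)
    (hdenom :
      specNorm (∑ i : Fin η, ((Matrix.diagonal σ)⁻¹) ^ ((i : ℕ) + 1) * (Uᵀ * W i)) <
        Real.sqrt (1 - (distP Uhat0 U) ^ 2)) :
    distP Uhat U ≤
      ((σr1 / σr) ^ η * distP Uhat0 U +
          (σr⁻¹) ^ η *
            specNorm (∑ i : Fin η,
              (Matrix.diagonal σp) ^ (η - 1 - (i : ℕ)) * (Uperpᵀ * W i))) /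
        (Real.sqrt (1 - (distP Uhat0 U) ^ 2) -
          specNorm (∑ i : Fin η, ((Matrix.diagonal σ)⁻¹) ^ ((i : ℕ) + 1) * (Uᵀ * W i))) := by
  classical
  have hσne : ∀ j, σ j ≠ 0 := fun j => ne_of_gt (lt_of_lt_of_le hσrpos (hσr j))
  -- transpose orthogonality
  have hperpU : Uperpᵀ * U = 0 := by
    have h := congrArg Matrix.transpose horth
    rw [Matrix.transpose_mul, Matrix.transpose_transpose, Matrix.transpose_zero] at h
    exact h
  by_cases hσr1nn : 0 ≤ σr1
  · -- main case
    set Em := ∑ i : Fin η, ((Matrix.diagonal σ)⁻¹) ^ ((i : ℕ) + 1) * (Uᵀ * W i) with hEmdef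
    set SPm := ∑ i : Fin η, (Matrix.diagonal σp) ^ (η - 1 - (i : ℕ)) * (Uperpᵀ * W i) with hSPdef
    set d0 := distP Uhat0 U with hd0def
    set eN := specNorm Em with heNdef
    set nu := specNorm SPm with hnudef
    set c0 := Real.sqrt (1 - d0 ^ 2) with hc0def
    set DD := c0 - eN with hDDdef
    clear_value Em SPm d0 eN nu c0 DD
    have hd0nn : 0 ≤ d0 := hd0def ▸ specNorm_nonneg' _
    have heNnn : 0 ≤ eN := heNdef ▸ specNorm_nonneg' _
    have hnunn : 0 ≤ nu := hnudef ▸ specNorm_nonneg' _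
    have hDDpos : 0 < DD := by rw [hDDdef]; exact sub_pos.mpr hdenom
    have hc0nn : 0 ≤ c0 := hc0def ▸ Real.sqrt_nonneg _
    have hsrη : (0:ℝ) < σr ^ η := pow_pos hσrpos η
    -- power commutation
    have hUA : Uᵀ * A = Matrix.diagonal σ * Uᵀ := by
      rw [hA, Matrix.mul_add]
      rw [show Uᵀ * (U * Matrix.diagonal σ * Uᵀ) = Matrix.diagonal σ * Uᵀ by
        rw [Matrix.mul_assoc U _ _, ← Matrix.mul_assoc Uᵀ U _, hU, Matrix.one_mul]]
      rw [show Uᵀ * (Uperp * Matrix.diagonal σp * Uperpᵀ) = 0 by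
        rw [Matrix.mul_assoc Uperp _ _, ← Matrix.mul_assoc Uᵀ Uperp _, horth, Matrix.zero_mul]]
      rw [add_zero]
    have hUpA : Uperpᵀ * A = Matrix.diagonal σp * Uperpᵀ := by
      rw [hA, Matrix.mul_add]
      rw [show Uperpᵀ * (U * Matrix.diagonal σ * Uᵀ) = 0 by
        rw [Matrix.mul_assoc U _ _, ← Matrix.mul_assoc Uperpᵀ U _, hperpU, Matrix.zero_mul]]
      rw [show Uperpᵀ * (Uperp * Matrix.diagonal σp * Uperpᵀ) = Matrix.diagonal σp * Uperpᵀ by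
        rw [Matrix.mul_assoc Uperp _ _, ← Matrix.mul_assoc Uperpᵀ Uperp _, hUp, Matrix.one_mul]]
      rw [zero_add]
    have hUAk := transpose_mul_pow hUA
    have hUpAk := transpose_mul_pow hUpA
    -- diagonal inverse
    have hdinv : (Matrix.diagonal σ)⁻¹ = Matrix.diagonal (fun j => (σ j)⁻¹) := by
      apply Matrix.inv_eq_right_inv
      rw [Matrix.diagonal_mul_diagonal]
      rw [show (fun j => σ j * (σ j)⁻¹) = fun _ => (1:ℝ) from
        funext fun j => mul_inv_cancel₀ (hσne j)]
      exact Matrix.diagonal_one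
    have hfact : ∀ i : Fin η,
        (Matrix.diagonal σ) ^ η * ((Matrix.diagonal σ)⁻¹) ^ ((i : ℕ) + 1) =
          (Matrix.diagonal σ) ^ (η - 1 - (i : ℕ)) := by
      intro i
      rw [hdinv, Matrix.diagonal_pow, Matrix.diagonal_pow, Matrix.diagonal_pow,
        Matrix.diagonal_mul_diagonal]
      apply congrArg Matrix.diagonal
      funext j
      have hlt : (i : ℕ) < η := i.isLt
      have hsplit : η = (η - 1 - (i : ℕ)) + ((i : ℕ) + 1) := by omega
      simp only [Pi.pow_apply, Pi.mul_apply]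
      calc σ j ^ η * ((σ j)⁻¹) ^ ((i : ℕ) + 1)
          = σ j ^ ((η - 1 - (i : ℕ)) + ((i : ℕ) + 1)) * ((σ j)⁻¹) ^ ((i : ℕ) + 1) := by
            rw [← hsplit]
        _ = σ j ^ (η - 1 - (i : ℕ)) := by
            rw [pow_add, mul_assoc, ← mul_pow, mul_inv_cancel₀ (hσne j), one_pow, mul_one]
    -- the unnormalized iterate
    set Ut := A ^ η * Uhat0 + ∑ i : Fin η, A ^ (η - 1 - (i : ℕ)) * W i with hUtdef
    clear_value Ut
    have hUTmat : Uᵀ * Ut = (Matrix.diagonal σ) ^ η * (Uᵀ * Uhat0 + Em) := by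
      rw [hUtdef, hEmdef, Matrix.mul_add, Matrix.mul_add, Matrix.mul_sum, Matrix.mul_sum]
      congr 1
      · rw [← Matrix.mul_assoc, hUAk η, Matrix.mul_assoc]
      · apply Finset.sum_congr rfl
        intro i _
        rw [← Matrix.mul_assoc, hUAk _, Matrix.mul_assoc, ← hfact i, Matrix.mul_assoc]
    have hPTmat : Uperpᵀ * Ut = (Matrix.diagonal σp) ^ η * (Uperpᵀ * Uhat0) + SPm := by
      rw [hUtdef, hSPdef, Matrix.mul_add, Matrix.mul_sum]
      congr 1
      · rw [← Matrix.mul_assoc, hUpAk η, Matrix.mul_assoc]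
      · apply Finset.sum_congr rfl
        intro i _
        rw [← Matrix.mul_assoc, hUpAk _, Matrix.mul_assoc]
    -- lower bound for Uhat0ᵀ U, then transposed
    have hc0le : ∀ x, c0 * ‖x‖ ≤ ‖tc (Uhat0ᵀ * U) x‖ := by
      intro x
      rcases le_or_gt (1 - d0 ^ 2) 0 with hneg | hpos
      · rw [hc0def, Real.sqrt_eq_zero_of_nonpos hneg, zero_mul]
        exact norm_nonneg _
      · apply sq_le_sq_imp_le (mul_nonneg hc0nn (norm_nonneg _)) (norm_nonneg _)
        rw [mul_pow, hc0def, Real.sq_sqrt hpos.le]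
        have hps := proj_norm_sq hU0 hU x
        have hb : ‖tc ((1 - Uhat0 * Uhat0ᵀ) * U) x‖ ≤ d0 * ‖x‖ := by
          have h := norm_tc_le ((1 - Uhat0 * Uhat0ᵀ) * U) x
          have hdd : specNorm ((1 - Uhat0 * Uhat0ᵀ) * U) = d0 := hd0def.symm
          rwa [hdd] at h
        have hb2 : ‖tc ((1 - Uhat0 * Uhat0ᵀ) * U) x‖ ^ 2 ≤ (d0 * ‖x‖) ^ 2 :=
          pow_le_pow_left₀ (norm_nonneg _) hb 2
        nlinarith [sq_nonneg ‖x‖]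
    have hsm0 : ∀ x, c0 * ‖x‖ ≤ ‖tc (Uᵀ * Uhat0) x‖ := by
      intro x
      have h := lower_bound_transpose hc0nn hc0le x
      rwa [Matrix.transpose_mul, Matrix.transpose_transpose] at h
    -- ‖Uperpᵀ Uhat0‖ ≤ d0
    have hc0sq : 1 - c0 ^ 2 ≤ d0 ^ 2 := by
      rcases le_or_gt (1 - d0 ^ 2) 0 with hneg | hpos
      · rw [hc0def, Real.sqrt_eq_zero_of_nonpos hneg]
        nlinarith
      · rw [hc0def, Real.sq_sqrt hpos.le]; linarith
    have hU0perp : specNorm (Uperpᵀ * Uhat0) ≤ d0 := by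
      apply specNorm_le_bound _ hd0nn
      intro x
      apply sq_le_sq_imp_le (norm_nonneg _) (mul_nonneg hd0nn (norm_nonneg _))
      rw [mul_pow]
      have hp := pythagoras hcomp (tc Uhat0 x)
      rw [norm_tc_of_orth hU0, ← tc_mul, ← tc_mul] at hp
      have h1 := hsm0 x
      have h1sq : (c0 * ‖x‖) ^ 2 ≤ ‖tc (Uᵀ * Uhat0) x‖ ^ 2 :=
        pow_le_pow_left₀ (mul_nonneg hc0nn (norm_nonneg _)) h1 2
      rw [mul_pow] at h1sq
      nlinarith [sq_nonneg ‖x‖]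
    -- lower bound for Rm
    have hRmlow : ∀ x, (σr ^ η * DD) * ‖x‖ ≤ ‖tc Rm x‖ := by
      intro x
      have hiso : ‖tc Rm x‖ = ‖tc Ut x‖ := by
        calc ‖tc Rm x‖ = ‖tc Uhat (tc Rm x)‖ := (norm_tc_of_orth hUhat _).symm
          _ = ‖tc (Uhat * Rm) x‖ := by rw [tc_mul]
          _ = ‖tc Ut x‖ := by rw [← hQR]
      rw [hiso]
      have hproj : ‖tc (Uᵀ * Ut) x‖ ≤ ‖tc Ut x‖ := by
        apply sq_le_sq_imp_le (norm_nonneg _) (norm_nonneg _)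
        have hp := pythagoras hcomp (tc Ut x)
        rw [← tc_mul, ← tc_mul] at hp
        nlinarith [sq_nonneg ‖tc (Uperpᵀ * Ut) x‖]
      refine le_trans ?_ hproj
      rw [hUTmat, tc_mul, Matrix.diagonal_pow]
      have hdlow : (σr ^ η) * ‖tc (Uᵀ * Uhat0 + Em) x‖ ≤
          ‖tc (Matrix.diagonal (σ ^ η)) (tc (Uᵀ * Uhat0 + Em) x)‖ := by
        apply norm_tc_diagonal_ge hsrη.le
        intro j
        simp only [Pi.pow_apply]
        rw [abs_of_nonneg (pow_nonneg (le_of_lt (lt_of_lt_of_le hσrpos (hσr j))) η)]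
        exact pow_le_pow_left₀ hσrpos.le (hσr j) η
      refine le_trans ?_ hdlow
      have hin : DD * ‖x‖ ≤ ‖tc (Uᵀ * Uhat0 + Em) x‖ := by
        rw [tc_add_apply]
        have h1 := hsm0 x
        have h2 : ‖tc Em x‖ ≤ eN * ‖x‖ := by
          have h := norm_tc_le Em x
          rwa [← heNdef] at h
        have h3 := norm_sub_norm_le (tc (Uᵀ * Uhat0) x) (-(tc Em x))
        rw [norm_neg, sub_neg_eq_add] at h3
        have : DD * ‖x‖ = c0 * ‖x‖ - eN * ‖x‖ := by rw [hDDdef]; ring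
        linarith
      calc σr ^ η * DD * ‖x‖ = σr ^ η * (DD * ‖x‖) := by ring
        _ ≤ σr ^ η * ‖tc (Uᵀ * Uhat0 + Em) x‖ := mul_le_mul_of_nonneg_left hin hsrη.le
    have hs : (0:ℝ) < σr ^ η * DD := mul_pos hsrη hDDpos
    have hsurj := surjective_of_lower_bound hs hRmlow
    have hnumnn : (0:ℝ) ≤ σr1 ^ η * d0 + nu :=
      add_nonneg (mul_nonneg (pow_nonneg hσr1nn η) hd0nn) hnunn
    have hXbound : specNorm (Uperpᵀ * Uhat) ≤ (σr1 ^ η * d0 + nu) / (σr ^ η * DD) := by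
      apply specNorm_le_bound _ (div_nonneg hnumnn hs.le)
      intro x
      obtain ⟨y, hy⟩ := hsurj x
      have hyle : ‖y‖ ≤ ‖x‖ / (σr ^ η * DD) := by
        rw [le_div_iff₀ hs]
        have h := hRmlow y
        rw [hy] at h
        linarith [h]
      have hval : tc (Uperpᵀ * Uhat) x = tc (Uperpᵀ * Ut) y := by
        rw [← hy, ← tc_mul, Matrix.mul_assoc, ← hQR]
      rw [hval, hPTmat, tc_add_apply]
      have ha : ‖tc ((Matrix.diagonal σp) ^ η * (Uperpᵀ * Uhat0)) y‖ ≤ σr1 ^ η * (d0 * ‖y‖) := by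
        rw [tc_mul, Matrix.diagonal_pow]
        have h1 : ‖tc (Matrix.diagonal (σp ^ η)) (tc (Uperpᵀ * Uhat0) y)‖ ≤
            σr1 ^ η * ‖tc (Uperpᵀ * Uhat0) y‖ := by
          apply norm_tc_diagonal_le (pow_nonneg hσr1nn η)
          intro j
          simp only [Pi.pow_apply]
          rw [abs_of_nonneg (pow_nonneg (hσpnn j) η)]
          exact pow_le_pow_left₀ (hσpnn j) (hσr1 j) η
        have h2 : ‖tc (Uperpᵀ * Uhat0) y‖ ≤ d0 * ‖y‖ := by
          have h := norm_tc_le (Uperpᵀ * Uhat0) y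
          exact h.trans (mul_le_mul_of_nonneg_right hU0perp (norm_nonneg _))
        exact h1.trans (mul_le_mul_of_nonneg_left h2 (pow_nonneg hσr1nn η))
      have hbb : ‖tc SPm y‖ ≤ nu * ‖y‖ := by
        have h := norm_tc_le SPm y
        rwa [← hnudef] at h
      calc ‖tc ((Matrix.diagonal σp) ^ η * (Uperpᵀ * Uhat0)) y + tc SPm y‖
          ≤ ‖tc ((Matrix.diagonal σp) ^ η * (Uperpᵀ * Uhat0)) y‖ + ‖tc SPm y‖ := norm_add_le _ _
        _ ≤ σr1 ^ η * (d0 * ‖y‖) + nu * ‖y‖ := add_le_add ha hbb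
        _ = (σr1 ^ η * d0 + nu) * ‖y‖ := by ring
        _ ≤ (σr1 ^ η * d0 + nu) * (‖x‖ / (σr ^ η * DD)) :=
            mul_le_mul_of_nonneg_left hyle hnumnn
        _ = (σr1 ^ η * d0 + nu) / (σr ^ η * DD) * ‖x‖ := by ring
    -- convert to goal RHS
    have hK : (σr1 ^ η * d0 + nu) / (σr ^ η * DD) =
        ((σr1 / σr) ^ η * d0 + (σr⁻¹) ^ η * nu) / DD := by
      rw [div_pow, inv_pow]
      field_simp
    have hXK : specNorm (Uperpᵀ * Uhat) ≤ ((σr1 / σr) ^ η * d0 + (σr⁻¹) ^ η * nu) / DD := by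
      rw [← hK]; exact hXbound
    -- final step
    have hGoal : ∀ G : ℝ, specNorm (Uperpᵀ * Uhat) ≤ G → distP Uhat U ≤ G := by
      intro G hXG
      have hXnn : 0 ≤ specNorm (Uperpᵀ * Uhat) := specNorm_nonneg' _
      have hGnn : 0 ≤ G := hXnn.trans hXG
      set X := specNorm (Uperpᵀ * Uhat) with hXdef
      set c1 := Real.sqrt (1 - X ^ 2) with hc1def
      have hc1nn : 0 ≤ c1 := Real.sqrt_nonneg _
      have h9a : ∀ x, c1 * ‖x‖ ≤ ‖tc (Uᵀ * Uhat) x‖ := by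
        intro x
        rcases le_or_gt (1 - X ^ 2) 0 with hneg | hpos
        · rw [hc1def, Real.sqrt_eq_zero_of_nonpos hneg, zero_mul]
          exact norm_nonneg _
        · apply sq_le_sq_imp_le (mul_nonneg hc1nn (norm_nonneg _)) (norm_nonneg _)
          rw [mul_pow, hc1def, Real.sq_sqrt hpos.le]
          have hp := pythagoras hcomp (tc Uhat x)
          rw [norm_tc_of_orth hUhat, ← tc_mul, ← tc_mul] at hp
          have h2 : ‖tc (Uperpᵀ * Uhat) x‖ ≤ X * ‖x‖ := by
            have h := norm_tc_le (Uperpᵀ * Uhat) x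
            rwa [← hXdef] at h
          have h2sq : ‖tc (Uperpᵀ * Uhat) x‖ ^ 2 ≤ (X * ‖x‖) ^ 2 :=
            pow_le_pow_left₀ (norm_nonneg _) h2 2
          rw [mul_pow] at h2sq
          nlinarith [sq_nonneg ‖x‖]
      have h9b := lower_bound_transpose hc1nn h9a
      have hc1sq : 1 - c1 ^ 2 ≤ X ^ 2 := by
        rcases le_or_gt (1 - X ^ 2) 0 with hneg | hpos
        · rw [hc1def, Real.sqrt_eq_zero_of_nonpos hneg]
          nlinarith
        · rw [hc1def, Real.sq_sqrt hpos.le]; linarith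
      show specNorm ((1 - Uhat * Uhatᵀ) * U) ≤ G
      apply specNorm_le_bound _ hGnn
      intro x
      apply sq_le_sq_imp_le (norm_nonneg _) (mul_nonneg hGnn (norm_nonneg _))
      rw [mul_pow]
      have hps := proj_norm_sq hUhat hU x
      have h3 : c1 * ‖x‖ ≤ ‖tc (Uhatᵀ * U) x‖ := by
        have h := h9b x
        rwa [Matrix.transpose_mul, Matrix.transpose_transpose] at h
      have h3sq : (c1 * ‖x‖) ^ 2 ≤ ‖tc (Uhatᵀ * U) x‖ ^ 2 :=
        pow_le_pow_left₀ (mul_nonneg hc1nn (norm_nonneg _)) h3 2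
      rw [mul_pow] at h3sq
      have hGsq : X ^ 2 ≤ G ^ 2 := pow_le_pow_left₀ hXnn hXG 2
      nlinarith [sq_nonneg ‖x‖]
    exact hGoal _ hXK
  · -- degenerate case: σr1 < 0, so n - r = 0
    push_neg at hσr1nn
    have hnr : n - r = 0 := by
      by_contra hne
      have hpos : 0 < n - r := Nat.pos_of_ne_zero hne
      have i0 : Fin (n - r) := ⟨0, hpos⟩
      linarith [hσpnn i0, hσr1 i0]
    have hUiso : ∀ z, ‖tc Uᵀ z‖ = ‖z‖ := by
      intro z
      have hp := pythagoras hcomp z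
      have h2 : ‖tc Uperpᵀ z‖ = 0 := by
        have hle : ‖tc Uperpᵀ z‖ ≤ 0 := by
          calc ‖tc Uperpᵀ z‖ ≤ specNorm Uperpᵀ * ‖z‖ := norm_tc_le _ _
            _ = 0 := by rw [specNorm_zero_rows hnr, zero_mul]
        exact le_antisymm hle (norm_nonneg _)
      rw [h2] at hp
      have h3 : ‖tc Uᵀ z‖ ^ 2 = ‖z‖ ^ 2 := by nlinarith
      have h4 := sq_le_sq_imp_le (norm_nonneg _) (norm_nonneg _) h3.le
      have h5 := sq_le_sq_imp_le (norm_nonneg _) (norm_nonneg _) h3.ge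
      linarith
    have key0 : ∀ Q : Matrix (Fin n) (Fin r) ℝ, Qᵀ * Q = 1 → distP Q U = 0 := by
      intro Q hQ
      have hlow : ∀ x, 1 * ‖x‖ ≤ ‖tc (Uᵀ * Q) x‖ := by
        intro x
        rw [one_mul, tc_mul, hUiso (tc Q x), norm_tc_of_orth hQ]
      have hlow2 := lower_bound_transpose zero_le_one hlow
      refine le_antisymm ?_ (specNorm_nonneg' _)
      apply specNorm_le_bound _ le_rfl
      intro x
      have hps := proj_norm_sq hQ hU x
      have h4 : ‖x‖ ≤ ‖tc (Qᵀ * U) x‖ := by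
        have h := hlow2 x
        rwa [Matrix.transpose_mul, Matrix.transpose_transpose, one_mul] at h
      have h5 : ‖tc ((1 - Q * Qᵀ) * U) x‖ ^ 2 ≤ 0 := by
        rw [hps]
        nlinarith [norm_nonneg x, norm_nonneg (tc (Qᵀ * U) x)]
      nlinarith [norm_nonneg (tc ((1 - Q * Qᵀ) * U) x), norm_nonneg x]
    rw [key0 Uhat hUhat, key0 Uhat0 hU0, specNorm_zero_rows hnr]
    rw [mul_zero, mul_zero, add_zero, zero_div]
end
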